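/- Consider an advertiser with global target ROI γ = 1 and unlimited budget procuring from 2 channels, where channel 1 has a single auction with value 1 and cost 0, and channel 2 has two auctions with values X and 2X and costs 1+X and 2(1+X) respectively, for a parameter X > 0. The global optimum (maximizing total value of fractionally procured auctions subject to total value ≥ total cost) equals 1 + X, while the maximum total value achievable by setting only per-channel target ROIs (where each channel greedily maximizes value subject to channel value ≥ per-channel ROI times channel cost) equals 1. Hence the ratio of channel-optimal to global-optimal value is 1/(1+X), which tends to 0 as X → ∞. -/

import Mathlib

open Filter

/-- Global optimum for the two-channel instance: fractional procurement of the three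
auctions maximizing total value subject to total value ≥ total cost (γ = 1, ρ = ∞). -/
noncomputable def glopt (X : ℝ) : ℝ :=
  sSup {v : ℝ | ∃ x₁ x₂ x₃ : ℝ,
    x₁ ∈ Set.Icc (0:ℝ) 1 ∧ x₂ ∈ Set.Icc (0:ℝ) 1 ∧ x₃ ∈ Set.Icc (0:ℝ) 1 ∧
    v = x₁ * 1 + x₂ * X + x₃ * (2 * X) ∧
    x₁ * 1 + x₂ * X + x₃ * (2 * X) ≥ x₁ * 0 + x₂ * (1 + X) + x₃ * (2 * (1 + X))}

/-- Feasibility of channel 2's procurement under per-channel target ROI γ₂. -/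
def chan2Feas (X γ₂ x₂ x₃ : ℝ) : Prop :=
  x₂ ∈ Set.Icc (0:ℝ) 1 ∧ x₃ ∈ Set.Icc (0:ℝ) 1 ∧
  x₂ * X + x₃ * (2 * X) ≥ γ₂ * (x₂ * (1 + X) + x₃ * (2 * (1 + X)))

/-- Best total conversion achievable via per-channel target ROIs only: channel 1 always
wins its (zero-cost) auction, channel 2 greedily maximizes value subject to its own ROI
constraint, and the aggregate ROI constraint (total value ≥ total cost) must hold. -/
noncomputable def chopt (X : ℝ) : ℝ :=
  sSup {v : ℝ | ∃ γ₂ x₂ x₃ : ℝ, 0 ≤ γ₂ ∧ chan2Feas X γ₂ x₂ x₃ ∧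
    (∀ y₂ y₃ : ℝ, chan2Feas X γ₂ y₂ y₃ →
      y₂ * X + y₃ * (2 * X) ≤ x₂ * X + x₃ * (2 * X)) ∧
    v = 1 + (x₂ * X + x₃ * (2 * X)) ∧
    v ≥ x₂ * (1 + X) + x₃ * (2 * (1 + X))}

lemma glopt_ub {X : ℝ} (hX : 0 < X) : ∀ v ∈ {v : ℝ | ∃ x₁ x₂ x₃ : ℝ,
    x₁ ∈ Set.Icc (0:ℝ) 1 ∧ x₂ ∈ Set.Icc (0:ℝ) 1 ∧ x₃ ∈ Set.Icc (0:ℝ) 1 ∧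
    v = x₁ * 1 + x₂ * X + x₃ * (2 * X) ∧
    x₁ * 1 + x₂ * X + x₃ * (2 * X) ≥ x₁ * 0 + x₂ * (1 + X) + x₃ * (2 * (1 + X))},
    v ≤ 1 + X := by
  rintro v ⟨x₁, x₂, x₃, ⟨h10, h11⟩, ⟨h20, h21⟩, ⟨h30, h31⟩, rfl, hc⟩
  nlinarith

lemma glopt_eq {X : ℝ} (hX : 0 < X) : glopt X = 1 + X := by
  have hmem : (1 + X) ∈ {v : ℝ | ∃ x₁ x₂ x₃ : ℝ,
      x₁ ∈ Set.Icc (0:ℝ) 1 ∧ x₂ ∈ Set.Icc (0:ℝ) 1 ∧ x₃ ∈ Set.Icc (0:ℝ) 1 ∧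
      v = x₁ * 1 + x₂ * X + x₃ * (2 * X) ∧
      x₁ * 1 + x₂ * X + x₃ * (2 * X) ≥ x₁ * 0 + x₂ * (1 + X) + x₃ * (2 * (1 + X))} := by
    exact ⟨1, 1, 0, by norm_num, by norm_num, by norm_num, by ring, by nlinarith⟩
  apply le_antisymm
  · exact csSup_le ⟨_, hmem⟩ (glopt_ub hX)
  · exact le_csSup ⟨1 + X, glopt_ub hX⟩ hmem

lemma chopt_ub {X : ℝ} (hX : 0 < X) : ∀ v ∈ {v : ℝ | ∃ γ₂ x₂ x₃ : ℝ, 0 ≤ γ₂ ∧ chan2Feas X γ₂ x₂ x₃ ∧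
    (∀ y₂ y₃ : ℝ, chan2Feas X γ₂ y₂ y₃ →
      y₂ * X + y₃ * (2 * X) ≤ x₂ * X + x₃ * (2 * X)) ∧
    v = 1 + (x₂ * X + x₃ * (2 * X)) ∧
    v ≥ x₂ * (1 + X) + x₃ * (2 * (1 + X))}, v ≤ 1 := by
  rintro v ⟨γ₂, x₂, x₃, hγ, ⟨⟨h20, h21⟩, ⟨h30, h31⟩, hfeas⟩, hmax, rfl, hagg⟩
  by_cases h : γ₂ * (1 + X) ≤ X
  · have h11 : chan2Feas X γ₂ 1 1 := by
      refine ⟨by norm_num, by norm_num, ?_⟩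
      nlinarith
    have := hmax 1 1 h11
    nlinarith
  · push_neg at h
    nlinarith

lemma chopt_eq {X : ℝ} (hX : 0 < X) : chopt X = 1 := by
  have hmem : (1:ℝ) ∈ {v : ℝ | ∃ γ₂ x₂ x₃ : ℝ, 0 ≤ γ₂ ∧ chan2Feas X γ₂ x₂ x₃ ∧
      (∀ y₂ y₃ : ℝ, chan2Feas X γ₂ y₂ y₃ →
        y₂ * X + y₃ * (2 * X) ≤ x₂ * X + x₃ * (2 * X)) ∧
      v = 1 + (x₂ * X + x₃ * (2 * X)) ∧
      v ≥ x₂ * (1 + X) + x₃ * (2 * (1 + X))} := by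
    refine ⟨1, 0, 0, zero_le_one, ⟨by norm_num, by norm_num, by norm_num⟩, ?_, by ring, by norm_num⟩
    rintro y₂ y₃ ⟨⟨hy20, hy21⟩, ⟨hy30, hy31⟩, hfeas⟩
    nlinarith
  apply le_antisymm
  · exact csSup_le ⟨_, hmem⟩ (chopt_ub hX)
  · exact le_csSup ⟨1, chopt_ub hX⟩ hmem

theorem roi_only_fails :
    (∀ X : ℝ, 0 < X →
      glopt X = 1 + X ∧ chopt X = 1 ∧ chopt X / glopt X = 1 / (1 + X)) ∧
    Tendsto (fun X : ℝ => chopt X / glopt X) atTop (nhds 0) := by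
  constructor
  · intro X hX
    refine ⟨glopt_eq hX, chopt_eq hX, ?_⟩
    rw [glopt_eq hX, chopt_eq hX]
  · have hev : (fun X : ℝ => 1 / (1 + X)) =ᶠ[atTop] fun X => chopt X / glopt X := by
      filter_upwards [eventually_gt_atTop (0:ℝ)] with X hX
      rw [glopt_eq hX, chopt_eq hX]
    refine Tendsto.congr' hev ?_
    have h1 : Tendsto (fun X : ℝ => 1 + X) atTop atTop :=
      tendsto_atTop_add_const_left atTop 1 tendsto_id
    simpa [one_div, Function.comp_def] using tendsto_inv_atTop_zero.comp h1
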